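/- arXiv:1107.4904 — 5 statements merged into one kernel-verified Lean document; each statement's English description precedes it below -/
import Mathlib

section
/- For 0 ≤ k ≤ n, define the iterated integral G_{n,k}(t) = ∫₀^t ds₁ ∫_{s₁}^t ds₂ ⋯ ∫_{s_{k−1}}^t ds_k [(t−s_k)^{n−k}/(n−k)!] ∏_{j=1}^k cosh c(s_j − s_{j−1}) · cosh c(t − s_k) with s₀ = 0. Then for γ > c > 0, ∫₀^∞ e^{−γt} G_{n,k}(t) dt = (γ/(γ² − c²))^k · (1/2)[1/(γ−c)^{n−k+1} + 1/(γ+c)^{n−k+1}]. -/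
open Real MeasureTheory intervalIntegral

/-- `G c n k t` is the iterated integral
`∫₀ᵗ ds₁ ⋯ ∫_{s_{k-1}}ᵗ ds_k ((t-s_k)^{n-k}/(n-k)!) ∏_{j=1}^k cosh c(s_j-s_{j-1}) · cosh c(t-s_k)`
(with `s₀ = 0`), written through its convolution recursion. -/
noncomputable def G (c : ℝ) : ℕ → ℕ → ℝ → ℝ
  | n, 0, t => t ^ n / n.factorial * Real.cosh (c * t)
  | n, k + 1, t => ∫ s in (0:ℝ)..t, Real.cosh (c * s) * G c (n - 1) k (t - s)

lemma shift_Ioi (F : ℝ → ℝ) (s : ℝ) :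
    ∫ t in Set.Ioi s, F (t - s) = ∫ u in Set.Ioi (0:ℝ), F u := by
  have hemb : MeasurableEmbedding (fun x : ℝ => x + s) :=
    (Homeomorph.addRight s).measurableEmbedding
  have h := (measurePreserving_add_right (volume : Measure ℝ) s).setIntegral_preimage_emb
    hemb (fun t => F (t - s)) (Set.Ioi s)
  have hpre : (fun x : ℝ => x + s) ⁻¹' Set.Ioi s = Set.Ioi 0 := by
    ext x; simp
  rw [hpre] at h
  rw [← h]
  simp

lemma shift_int {F : ℝ → ℝ} (hF : IntegrableOn F (Set.Ioi 0)) (s : ℝ) :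
    IntegrableOn (fun t => F (t - s)) (Set.Ioi s) := by
  rw [← integrable_indicator_iff measurableSet_Ioi] at hF ⊢
  have h := hF.comp_sub_right s
  refine h.congr (Filter.Eventually.of_forall fun t => ?_)
  simp [Set.indicator_apply, sub_pos]

lemma cosh_le_exp_self {x : ℝ} (hx : 0 ≤ x) : Real.cosh x ≤ Real.exp x := by
  rw [Real.cosh_eq]
  have h : Real.exp (-x) ≤ Real.exp x := Real.exp_le_exp.2 (by linarith)
  linarith [Real.exp_pos x]

lemma integrable_exp_poly {b : ℝ} (hb : 0 < b) (n : ℕ) :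
    IntegrableOn (fun t => t ^ n * Real.exp (-b * t)) (Set.Ioi (0:ℝ)) := by
  have h := integrableOn_rpow_mul_exp_neg_mul_rpow
    (by exact_mod_cast neg_one_lt_zero.trans_le (Nat.cast_nonneg (α := ℝ) n) : (-1:ℝ) < n)
    (zero_lt_one : (0:ℝ) < 1) hb
  refine h.congr_fun (fun x hx => ?_) measurableSet_Ioi
  beta_reduce; rw [Real.rpow_natCast, Real.rpow_one]

lemma integral_exp_poly {b : ℝ} (hb : 0 < b) (n : ℕ) :
    ∫ t in Set.Ioi (0:ℝ), t ^ n * Real.exp (-b * t) = n.factorial / b ^ (n + 1) := by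
  have h := integral_rpow_mul_exp_neg_mul_rpow (p := 1) (q := n) (b := b) one_pos
    (by exact_mod_cast neg_one_lt_zero.trans_le (Nat.cast_nonneg (α := ℝ) n)) hb
  rw [show (∫ t in Set.Ioi (0:ℝ), t ^ n * Real.exp (-b * t)) =
      ∫ x in Set.Ioi (0:ℝ), x ^ (n:ℝ) * Real.exp (-b * x ^ (1:ℝ)) from
    setIntegral_congr_fun measurableSet_Ioi fun x _ => by
      rw [Real.rpow_natCast, Real.rpow_one], h]
  rw [div_one, div_one, div_one, Real.Gamma_nat_eq_factorial,
    show ((-(↑n + 1)) : ℝ) = -((n+1 : ℕ) : ℝ) by push_cast; ring,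
    Real.rpow_neg hb.le, Real.rpow_natCast]
  field_simp

lemma G_continuous (c : ℝ) : ∀ k n, Continuous (G c n k)
  | 0, n => by
      show Continuous fun t => t ^ n / n.factorial * Real.cosh (c * t)
      fun_prop
  | k+1, n => by
      have IH := G_continuous c k (n-1)
      show Continuous fun t => ∫ s in (0:ℝ)..t, Real.cosh (c * s) * G c (n - 1) k (t - s)
      exact intervalIntegral.continuous_parametric_intervalIntegral_of_continuous
        (by fun_prop) continuous_id

lemma G_bound (c : ℝ) (hc : 0 ≤ c) :
    ∀ k n, k ≤ n → ∀ t : ℝ, 0 ≤ t → |G c n k t| ≤ t ^ n * Real.exp (c * t)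
  | 0, n, _, t, ht => by
      show |t ^ n / n.factorial * Real.cosh (c * t)| ≤ _
      rw [abs_mul, abs_of_nonneg (by positivity : (0:ℝ) ≤ t ^ n / n.factorial),
        abs_of_nonneg (Real.cosh_pos (x := c*t)).le]
      have h1 : t ^ n / n.factorial ≤ t ^ n :=
        div_le_self (by positivity) (Nat.one_le_cast.mpr n.factorial_pos)
      exact mul_le_mul h1 (cosh_le_exp_self (by positivity)) (Real.cosh_pos _).le (by positivity)
  | k+1, n, hkn, t, ht => by
      have hn : 1 ≤ n := le_trans (Nat.succ_le_succ (Nat.zero_le k)) hkn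
      have hGc := G_continuous c k (n-1)
      show |∫ s in (0:ℝ)..t, Real.cosh (c * s) * G c (n - 1) k (t - s)| ≤ _
      have hint : IntervalIntegrable
          (fun s => Real.cosh (c * s) * G c (n - 1) k (t - s)) volume 0 t :=
        (Continuous.intervalIntegrable (by fun_prop) 0 t)
      calc |∫ s in (0:ℝ)..t, Real.cosh (c * s) * G c (n - 1) k (t - s)|
          ≤ ∫ s in (0:ℝ)..t, |Real.cosh (c * s) * G c (n - 1) k (t - s)| :=
            intervalIntegral.abs_integral_le_integral_abs ht
        _ ≤ ∫ _s in (0:ℝ)..t, t ^ (n-1) * Real.exp (c * t) := by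
            apply intervalIntegral.integral_mono_on ht hint.abs intervalIntegrable_const
            intro s hs
            obtain ⟨hs0, hst⟩ := hs
            have h1 : |Real.cosh (c * s)| ≤ Real.exp (c * s) := by
              rw [abs_of_nonneg (Real.cosh_pos _).le]
              exact cosh_le_exp_self (by positivity)
            have h2 : |G c (n-1) k (t - s)| ≤ (t - s) ^ (n-1) * Real.exp (c * (t - s)) :=
              G_bound c hc k (n-1) (by omega) (t - s) (by linarith)
            calc |Real.cosh (c * s) * G c (n - 1) k (t - s)|
                = |Real.cosh (c * s)| * |G c (n - 1) k (t - s)| := abs_mul _ _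
              _ ≤ Real.exp (c * s) * ((t - s) ^ (n-1) * Real.exp (c * (t - s))) :=
                  mul_le_mul h1 h2 (abs_nonneg _) (Real.exp_pos _).le
              _ ≤ Real.exp (c * s) * (t ^ (n-1) * Real.exp (c * (t - s))) := by
                  gcongr
                  · linarith
              _ = t ^ (n-1) * Real.exp (c * t) := by
                  rw [show c * t = c * s + c * (t - s) by ring, Real.exp_add]; ring
        _ = t * (t ^ (n-1) * Real.exp (c * t)) := by
            rw [intervalIntegral.integral_const]; simp
        _ = t ^ n * Real.exp (c * t) := by
            rw [← mul_assoc, mul_comm t (t ^ (n-1)), ← pow_succ,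
              Nat.sub_add_cancel hn]

lemma G_laplace_integrable {c γ : ℝ} (hc : 0 < c) (hγ : c < γ) {k n : ℕ} (hkn : k ≤ n) :
    IntegrableOn (fun t => Real.exp (-γ * t) * G c n k t) (Set.Ioi (0:ℝ)) := by
  have hdom := integrable_exp_poly (sub_pos.2 hγ) n
  refine Integrable.mono' hdom ?_ ?_
  · have hGc := G_continuous c k n
    exact (Continuous.aestronglyMeasurable (by fun_prop))
  · filter_upwards [ae_restrict_mem measurableSet_Ioi] with t ht
    have hb := G_bound c hc.le k n hkn t (le_of_lt ht)
    calc ‖Real.exp (-γ * t) * G c n k t‖ = Real.exp (-γ * t) * |G c n k t| := by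
          rw [Real.norm_eq_abs, abs_mul, Real.abs_exp]
      _ ≤ Real.exp (-γ * t) * (t ^ n * Real.exp (c * t)) := by
          exact mul_le_mul_of_nonneg_left hb (Real.exp_pos _).le
      _ = t ^ n * Real.exp (-(γ - c) * t) := by
          rw [show (-(γ - c) * t) = -γ * t + c * t by ring, Real.exp_add]; ring

lemma laplace_G_zero (c γ : ℝ) (hc : 0 < c) (hγ : c < γ) (n : ℕ) :
    ∫ t in Set.Ioi (0:ℝ), Real.exp (-γ * t) * G c n 0 t =
      (1/2) * (1 / (γ - c) ^ (n+1) + 1 / (γ + c) ^ (n+1)) := by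
  have h1 : (0:ℝ) < γ - c := sub_pos.2 hγ
  have h2 : (0:ℝ) < γ + c := by linarith
  have key : ∀ t : ℝ, Real.exp (-γ * t) * G c n 0 t =
      (1 / (2 * n.factorial)) *
        (t ^ n * Real.exp (-(γ - c) * t) + t ^ n * Real.exp (-(γ + c) * t)) := by
    intro t
    show Real.exp (-γ * t) * (t ^ n / n.factorial * Real.cosh (c * t)) = _
    rw [Real.cosh_eq, show (-(γ - c) * t) = -γ * t + c * t by ring,
      show (-(γ + c) * t) = -γ * t + -(c * t) by ring, Real.exp_add, Real.exp_add]
    have hfac : (n.factorial : ℝ) ≠ 0 := by positivity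
    field_simp
  simp_rw [key]
  rw [MeasureTheory.integral_const_mul,
    integral_add (integrable_exp_poly h1 n) (integrable_exp_poly h2 n),
    integral_exp_poly h1 n, integral_exp_poly h2 n]
  have hfac : (n.factorial : ℝ) ≠ 0 := by positivity
  field_simp

lemma laplace_conv {γ : ℝ} {f g : ℝ → ℝ} (hfc : Continuous f) (hgc : Continuous g)
    (hf : IntegrableOn (fun s => Real.exp (-γ * s) * f s) (Set.Ioi 0))
    (hg : IntegrableOn (fun t => Real.exp (-γ * t) * g t) (Set.Ioi 0)) :
    ∫ t in Set.Ioi (0:ℝ), Real.exp (-γ * t) * ∫ s in (0:ℝ)..t, f s * g (t - s) =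
      (∫ s in Set.Ioi (0:ℝ), Real.exp (-γ * s) * f s) *
        (∫ t in Set.Ioi (0:ℝ), Real.exp (-γ * t) * g t) := by
  set μ := volume.restrict (Set.Ioi (0:ℝ)) with hμ
  set K : ℝ → ℝ → ℝ :=
    fun s t => if s < t then Real.exp (-γ * t) * (f s * g (t - s)) else 0 with hK
  have hf_abs : IntegrableOn (fun s => Real.exp (-γ * s) * |f s|) (Set.Ioi 0) := by
    simpa only [IntegrableOn, abs_mul, Real.abs_exp] using hf.abs
  have hg_abs : IntegrableOn (fun t => Real.exp (-γ * t) * |g t|) (Set.Ioi 0) := by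
    simpa only [IntegrableOn, abs_mul, Real.abs_exp] using hg.abs
  -- generic computation of the inner t-integral
  have key : ∀ t s : ℝ, Real.exp (-γ * t) = Real.exp (-γ * s) * Real.exp (-γ * (t - s)) := by
    intro t s; rw [← Real.exp_add]; congr 1; ring
  have main : ∀ (F Gg : ℝ → ℝ), IntegrableOn (fun u => Real.exp (-γ * u) * Gg u) (Set.Ioi 0) →
      ∀ s : ℝ, 0 ≤ s →
      (∫ t, (Set.Ioi s).indicator (fun t => Real.exp (-γ * t) * (F s * Gg (t - s))) t ∂μ) =
        (Real.exp (-γ * s) * F s) * ∫ u in Set.Ioi (0:ℝ), Real.exp (-γ * u) * Gg u := by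
    intro F Gg _ s hs
    rw [hμ, MeasureTheory.integral_indicator measurableSet_Ioi, Measure.restrict_restrict measurableSet_Ioi,
      show Set.Ioi s ∩ Set.Ioi (0:ℝ) = Set.Ioi s by
        rw [Set.Ioi_inter_Ioi, max_eq_left hs]]
    rw [show (fun t => Real.exp (-γ * t) * (F s * Gg (t - s))) =
        (fun t => (Real.exp (-γ * s) * F s) * (Real.exp (-γ * (t - s)) * Gg (t - s))) from
      funext fun t => by rw [key t s]; ring]
    rw [MeasureTheory.integral_const_mul]
    congr 1
    exact shift_Ioi (fun u => Real.exp (-γ * u) * Gg u) s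
  -- slice integrability (for every s)
  have hKind : ∀ s, K s =
      (Set.Ioi s).indicator (fun t => Real.exp (-γ * t) * (f s * g (t - s))) := by
    intro s; funext t; simp only [hK, Set.indicator_apply, Set.mem_Ioi]
  have hslice : ∀ s : ℝ, Integrable (K s) μ := by
    intro s
    rw [hKind s, hμ, integrable_indicator_iff measurableSet_Ioi, IntegrableOn,
      Measure.restrict_restrict measurableSet_Ioi]
    have h2 : IntegrableOn (fun t => Real.exp (-γ * (t - s)) * g (t - s)) (Set.Ioi s) :=
      shift_int hg s
    have h3 := h2.const_mul (Real.exp (-γ * s) * f s)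
    have h4 : IntegrableOn (fun t => Real.exp (-γ * t) * (f s * g (t - s))) (Set.Ioi s) :=
      MeasureTheory.IntegrableOn.congr_fun h3 (fun t _ => by rw [key t s]; ring)
        measurableSet_Ioi
    exact h4.mono_set Set.inter_subset_left
  -- norms of slices
  have normK : ∀ s, (fun t => ‖K s t‖) =
      (Set.Ioi s).indicator (fun t => Real.exp (-γ * t) * (|f s| * |g (t - s)|)) := by
    intro s; funext t
    simp only [hK, Set.indicator_apply, Set.mem_Ioi]
    split
    · rw [Real.norm_eq_abs, abs_mul, Real.abs_exp, abs_mul]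
    · simp
  -- measurability
  have hmeas : AEStronglyMeasurable (Function.uncurry K) (μ.prod μ) := by
    apply (Measurable.stronglyMeasurable ?_).aestronglyMeasurable
    show Measurable fun p : ℝ × ℝ =>
      if p.1 < p.2 then Real.exp (-γ * p.2) * (f p.1 * g (p.2 - p.1)) else 0
    exact Measurable.ite (measurableSet_lt measurable_fst measurable_snd)
      (Continuous.measurable (by fun_prop)) measurable_const
  -- product integrability
  have hint : Integrable (Function.uncurry K) (μ.prod μ) := by
    rw [integrable_prod_iff hmeas]
    constructor
    · exact Filter.Eventually.of_forall fun s => hslice s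
    · have hcongr : ∀ᵐ s ∂μ, (∫ t, ‖K s t‖ ∂μ) =
          (fun s => (Real.exp (-γ * s) * |f s|) *
            ∫ u in Set.Ioi (0:ℝ), Real.exp (-γ * u) * |g u|) s := by
        filter_upwards [ae_restrict_mem measurableSet_Ioi] with s hs
        rw [show (∫ t, ‖K s t‖ ∂μ) = ∫ t, (fun t => ‖K s t‖) t ∂μ from rfl, normK s]
        exact main (fun s => |f s|) (fun u => |g u|) hg_abs s (le_of_lt hs)
      exact ((hf_abs.mul_const _).congr (hcongr.mono fun s h => h.symm))
  -- swap
  have hswap := integral_integral_swap hint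
  -- evaluate the (s,t) side
  have hL : ∫ s, ∫ t, K s t ∂μ ∂μ =
      (∫ s in Set.Ioi (0:ℝ), Real.exp (-γ * s) * f s) *
        (∫ t in Set.Ioi (0:ℝ), Real.exp (-γ * t) * g t) := by
    have hcongr : ∀ᵐ s ∂μ, (∫ t, K s t ∂μ) =
        (fun s => (Real.exp (-γ * s) * f s) *
          ∫ u in Set.Ioi (0:ℝ), Real.exp (-γ * u) * g u) s := by
      filter_upwards [ae_restrict_mem measurableSet_Ioi] with s hs
      rw [show (∫ t, K s t ∂μ) = ∫ t, (K s) t ∂μ from rfl, hKind s]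
      exact main f g hg s (le_of_lt hs)
    rw [integral_congr_ae hcongr, MeasureTheory.integral_mul_const]
  -- evaluate the (t,s) side
  have hR : ∫ t, ∫ s, K s t ∂μ ∂μ =
      ∫ t in Set.Ioi (0:ℝ), Real.exp (-γ * t) * ∫ s in (0:ℝ)..t, f s * g (t - s) := by
    refine setIntegral_congr_fun measurableSet_Ioi fun t ht => ?_
    have h1 : (fun s => K s t) =
        (Set.Iio t).indicator (fun s => Real.exp (-γ * t) * (f s * g (t - s))) := by
      funext s; simp only [hK, Set.indicator_apply, Set.mem_Iio]
    rw [h1, hμ, MeasureTheory.integral_indicator measurableSet_Iio,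
      Measure.restrict_restrict measurableSet_Iio,
      show Set.Iio t ∩ Set.Ioi (0:ℝ) = Set.Ioo 0 t by
        rw [Set.inter_comm, Set.Ioi_inter_Iio],
      intervalIntegral.integral_of_le (le_of_lt ht),
      MeasureTheory.integral_Ioc_eq_integral_Ioo, MeasureTheory.integral_const_mul]
  rw [← hR, ← hswap, hL]

lemma cosh_laplace_integrable {c γ : ℝ} (hc : 0 < c) (hγ : c < γ) :
    IntegrableOn (fun s => Real.exp (-γ * s) * Real.cosh (c * s)) (Set.Ioi (0:ℝ)) := by
  have h := G_laplace_integrable (k := 0) (n := 0) hc hγ le_rfl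
  refine h.congr_fun (fun s _ => ?_) measurableSet_Ioi
  show Real.exp (-γ*s) * (s ^ 0 / (Nat.factorial 0 : ℝ) * Real.cosh (c*s)) = _
  norm_num

lemma laplace_cosh {c γ : ℝ} (hc : 0 < c) (hγ : c < γ) :
    ∫ s in Set.Ioi (0:ℝ), Real.exp (-γ * s) * Real.cosh (c * s) = γ / (γ ^ 2 - c ^ 2) := by
  have h := laplace_G_zero c γ hc hγ 0
  rw [show (∫ t in Set.Ioi (0:ℝ), Real.exp (-γ * t) * G c 0 0 t) =
      ∫ s in Set.Ioi (0:ℝ), Real.exp (-γ * s) * Real.cosh (c * s) from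
    setIntegral_congr_fun measurableSet_Ioi fun s _ => by
      show Real.exp (-γ*s) * (s ^ 0 / Nat.factorial 0 * Real.cosh (c*s)) = _
      norm_num] at h
  rw [h]
  have h1 : γ - c ≠ 0 := ne_of_gt (by linarith)
  have h2 : γ + c ≠ 0 := ne_of_gt (by linarith)
  rw [show γ ^ 2 - c ^ 2 = (γ - c) * (γ + c) by ring]
  field_simp
  ring

theorem laplace_G (c γ : ℝ) (n k : ℕ) (hc : 0 < c) (hγ : c < γ) (hkn : k ≤ n) :
    ∫ t in Set.Ioi (0:ℝ), Real.exp (-γ * t) * G c n k t =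
      (γ / (γ ^ 2 - c ^ 2)) ^ k *
        ((1 / 2) * (1 / (γ - c) ^ (n - k + 1) + 1 / (γ + c) ^ (n - k + 1))) := by
  induction k generalizing n with
  | zero =>
    simpa using laplace_G_zero c γ hc hγ n
  | succ k ih =>
    have hn1 : k ≤ n - 1 := by omega
    have hstep := laplace_conv (γ := γ) (f := fun s => Real.cosh (c * s)) (g := G c (n-1) k)
      (by fun_prop) (G_continuous c k (n-1)) (cosh_laplace_integrable hc hγ)
      (G_laplace_integrable hc hγ hn1)
    rw [show (∫ t in Set.Ioi (0:ℝ), Real.exp (-γ * t) * G c n (k+1) t) =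
        ∫ t in Set.Ioi (0:ℝ), Real.exp (-γ * t) *
          ∫ s in (0:ℝ)..t, Real.cosh (c * s) * G c (n-1) k (t - s) from rfl]
    rw [hstep, laplace_cosh hc hγ, ih (n-1) hn1,
      show n - 1 - k = n - (k + 1) by omega, pow_succ]
    ring
end

section
/- The function G_{n,n}(t) = ∫₀^t ds₁ ⋯ ∫_{s_{n−1}}^t ds_n ∏_{j=1}^{n+1} cosh c(s_j − s_{j−1}) (with s₀ = 0, s_{n+1} = t) satisfies G_{n,n}''(t) = G_{n−1,n−1}'(t) + c² G_{n,n}(t) for n ≥ 1. -/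
open Real MeasureTheory intervalIntegral

namespace Gaux

noncomputable def A (c : ℝ) (g : ℝ → ℝ) (t : ℝ) : ℝ :=
  ∫ u in (0:ℝ)..t, Real.cosh (c*u) * g u

noncomputable def B (c : ℝ) (g : ℝ → ℝ) (t : ℝ) : ℝ :=
  ∫ u in (0:ℝ)..t, Real.sinh (c*u) * g u

lemma conv_eq (c : ℝ) (g : ℝ → ℝ) (hg : Continuous g) (t : ℝ) :
    (∫ s in (0:ℝ)..t, Real.cosh (c*s) * g (t-s)) =
      Real.cosh (c*t) * A c g t - Real.sinh (c*t) * B c g t := by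
  have h1 : (∫ s in (0:ℝ)..t, Real.cosh (c*s) * g (t-s)) =
      ∫ u in (0:ℝ)..t, Real.cosh (c*(t-u)) * g u := by
    have h := intervalIntegral.integral_comp_sub_left (a := 0) (b := t)
      (fun u => Real.cosh (c*(t-u)) * g u) t
    simp only [sub_zero, sub_self] at h
    rw [← h]
    apply intervalIntegral.integral_congr
    intro s _
    simp [sub_sub_cancel]
  rw [h1]
  have h2 : ∀ u : ℝ, Real.cosh (c*(t-u)) * g u =
      Real.cosh (c*t) * (Real.cosh (c*u) * g u) - Real.sinh (c*t) * (Real.sinh (c*u) * g u) := by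
    intro u
    rw [mul_sub, Real.cosh_sub]
    ring
  simp_rw [h2]
  rw [intervalIntegral.integral_sub, intervalIntegral.integral_const_mul,
    intervalIntegral.integral_const_mul]
  · rfl
  · exact (continuous_const.mul ((Real.continuous_cosh.comp (continuous_const.mul continuous_id)).mul hg)).intervalIntegrable _ _
  · exact (continuous_const.mul ((Real.continuous_sinh.comp (continuous_const.mul continuous_id)).mul hg)).intervalIntegrable _ _

lemma hasDerivAt_A (c : ℝ) (g : ℝ → ℝ) (hg : Continuous g) (t : ℝ) :
    HasDerivAt (A c g) (Real.cosh (c*t) * g t) t := by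
  have hcont : Continuous fun u => Real.cosh (c*u) * g u :=
    (Real.continuous_cosh.comp (continuous_const.mul continuous_id)).mul hg
  exact intervalIntegral.integral_hasDerivAt_right (hcont.intervalIntegrable _ _)
    (hcont.stronglyMeasurableAtFilter _ _) hcont.continuousAt

lemma hasDerivAt_B (c : ℝ) (g : ℝ → ℝ) (hg : Continuous g) (t : ℝ) :
    HasDerivAt (B c g) (Real.sinh (c*t) * g t) t := by
  have hcont : Continuous fun u => Real.sinh (c*u) * g u :=
    (Real.continuous_sinh.comp (continuous_const.mul continuous_id)).mul hg
  exact intervalIntegral.integral_hasDerivAt_right (hcont.intervalIntegrable _ _)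
    (hcont.stronglyMeasurableAtFilter _ _) hcont.continuousAt

lemma hasDerivAt_cosh_c (c t : ℝ) : HasDerivAt (fun t => Real.cosh (c*t)) (c * Real.sinh (c*t)) t := by
  have := (Real.hasDerivAt_cosh (c*t)).comp t ((hasDerivAt_id t).const_mul c)
  simpa [mul_comm, Function.comp_def] using this

lemma hasDerivAt_sinh_c (c t : ℝ) : HasDerivAt (fun t => Real.sinh (c*t)) (c * Real.cosh (c*t)) t := by
  have := (Real.hasDerivAt_sinh (c*t)).comp t ((hasDerivAt_id t).const_mul c)
  simpa [mul_comm, Function.comp_def] using this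

lemma hasDerivAt_conv (c : ℝ) (g : ℝ → ℝ) (hg : Continuous g) (t : ℝ) :
    HasDerivAt (fun t => ∫ s in (0:ℝ)..t, Real.cosh (c*s) * g (t-s))
      (c * Real.sinh (c*t) * A c g t - c * Real.cosh (c*t) * B c g t + g t) t := by
  have h : HasDerivAt (fun t => Real.cosh (c*t) * A c g t - Real.sinh (c*t) * B c g t)
      (c * Real.sinh (c*t) * A c g t - c * Real.cosh (c*t) * B c g t + g t) t := by
    have := ((hasDerivAt_cosh_c c t).mul (hasDerivAt_A c g hg t)).sub
      ((hasDerivAt_sinh_c c t).mul (hasDerivAt_B c g hg t))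
    refine this.congr_deriv ?_ |>.congr_of_eventuallyEq (Filter.Eventually.of_forall fun _ => rfl)
    symm
    linear_combination -(g t) * Real.cosh_sq_sub_sinh_sq (c*t)
  exact h.congr_of_eventuallyEq (Filter.Eventually.of_forall fun x => conv_eq c g hg x)

lemma cont_diff_diag (c : ℝ) (m : ℕ) :
    Continuous (G c m m) ∧ Differentiable ℝ (G c m m) := by
  induction m with
  | zero =>
      have h : G c 0 0 = fun t => Real.cosh (c * t) := by
        funext t; simp [G]
      rw [h]
      constructor
      · exact Real.continuous_cosh.comp (continuous_const.mul continuous_id)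
      · intro t; exact (hasDerivAt_cosh_c c t).differentiableAt
  | succ m ih =>
      have h : G c (m+1) (m+1) = fun t => ∫ s in (0:ℝ)..t, Real.cosh (c*s) * G c m m (t-s) := by
        funext t; simp [G]
      rw [h]
      have hdiff : Differentiable ℝ (fun t => ∫ s in (0:ℝ)..t, Real.cosh (c*s) * G c m m (t-s)) :=
        fun t => (hasDerivAt_conv c (G c m m) ih.1 t).differentiableAt
      exact ⟨hdiff.continuous, hdiff⟩

end Gaux

open Gaux in
theorem G_diag_ode (c : ℝ) (n : ℕ) (hc : 0 < c) (hn : 1 ≤ n) (t : ℝ) :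
    deriv (deriv (G c n n)) t = deriv (G c (n - 1) (n - 1)) t + c ^ 2 * G c n n t := by
  obtain ⟨m, rfl⟩ : ∃ m, n = m + 1 := ⟨n - 1, (Nat.succ_pred_eq_of_pos hn).symm⟩
  set g := G c m m with hgdef
  have hgc : Continuous g := (cont_diff_diag c m).1
  have hgd : Differentiable ℝ g := (cont_diff_diag c m).2
  have hF : G c (m+1) (m+1) = fun t => ∫ s in (0:ℝ)..t, Real.cosh (c*s) * g (t-s) := by
    funext t; simp [G, hgdef]
  have hd1 : deriv (G c (m+1) (m+1)) =
      fun t => c * Real.sinh (c*t) * A c g t - c * Real.cosh (c*t) * B c g t + g t := by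
    funext x
    rw [hF]
    exact (hasDerivAt_conv c g hgc x).deriv
  have hd2 : HasDerivAt (fun t => c * Real.sinh (c*t) * A c g t - c * Real.cosh (c*t) * B c g t + g t)
      ((c * (c * Real.cosh (c*t)) * A c g t + c * Real.sinh (c*t) * (Real.cosh (c*t) * g t))
        - (c * (c * Real.sinh (c*t)) * B c g t + c * Real.cosh (c*t) * (Real.sinh (c*t) * g t))
        + deriv g t) t := by
    exact ((((hasDerivAt_sinh_c c t).const_mul c).mul (hasDerivAt_A c g hgc t)).sub
      (((hasDerivAt_cosh_c c t).const_mul c).mul (hasDerivAt_B c g hgc t))).add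
      (hgd t).hasDerivAt
  have key : deriv (deriv (G c (m+1) (m+1))) t =
      ((c * (c * Real.cosh (c*t)) * A c g t + c * Real.sinh (c*t) * (Real.cosh (c*t) * g t))
        - (c * (c * Real.sinh (c*t)) * B c g t + c * Real.cosh (c*t) * (Real.sinh (c*t) * g t))
        + deriv g t) := by
    rw [hd1]; exact hd2.deriv
  rw [key]
  have hFt : G c (m+1) (m+1) t = Real.cosh (c*t) * A c g t - Real.sinh (c*t) * B c g t := by
    rw [hF]; exact conv_eq c g hgc t
  have hm : (m + 1 - 1) = m := by omega
  rw [hFt, hm, ← hgdef]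
  ring
end

section
/- Define u(t) = e^{−λt/2} Σ_{n=0}^∞ (λ/2)^n G_{n,n}(t), where G_{n,n}(t) = ∫ over 0 < s₁ < ⋯ < s_n < t of ∏_{j=1}^{n+1} cosh c(s_j − s_{j−1}) (s₀ = 0, s_{n+1} = t). Then u(t) = (e^{−λt/4}/2)[(1 + λ/√(λ² + 16c²)) e^{(t/4)√(λ² + 16c²)} + (1 − λ/√(λ² + 16c²)) e^{−(t/4)√(λ² + 16c²)}]. -/
open Real MeasureTheory intervalIntegral
open Finset


lemma hockey (n K : ℕ) : ∑ M ∈ Finset.range (K+1), (M+n).choose n = (K+n+1).choose (n+1) := by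
  induction K with
  | zero => simp
  | succ K ih =>
      rw [Finset.sum_range_succ, ih]
      have h1 : K+1+n+1 = (K+n+1)+1 := by ring
      rw [h1, Nat.choose_succ_succ' (K+n+1) n]
      have h2 : K+1+n = K+n+1 := by ring
      rw [h2]
      omega

lemma choose_le_two_pow (N k : ℕ) : N.choose k ≤ 2^N := by
  rcases le_or_gt k N with h | h
  · calc N.choose k ≤ ∑ m ∈ Finset.range (N+1), N.choose m :=
        Finset.single_le_sum (fun i _ => Nat.zero_le _) (Finset.mem_range.2 (by omega))
    _ = 2^N := Nat.sum_range_choose N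
  · rw [Nat.choose_eq_zero_of_lt h]; exact Nat.zero_le _

lemma beta_int (b a : ℕ) (t : ℝ) :
    ∫ s in (0:ℝ)..t, s ^ a * (t - s) ^ b
      = (a.factorial * b.factorial : ℝ) / (a + b + 1).factorial * t ^ (a + b + 1) := by
  induction b generalizing a with
  | zero =>
      simp only [pow_zero, mul_one, integral_pow, Nat.factorial_zero, Nat.add_zero]
      rw [zero_pow (by omega)]
      field_simp [Nat.factorial_succ]
      rw [Nat.factorial_succ]; push_cast
      ring
  | succ b ih =>
      have ha : ((a:ℝ)+1) ≠ 0 := by positivity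
      have hu : ∀ x ∈ Set.uIcc (0:ℝ) t,
          HasDerivAt (fun s : ℝ => (t - s) ^ (b+1)) (-(((b:ℝ)+1) * (t - x) ^ b)) x := by
        intro x _
        have h1 : HasDerivAt (fun s : ℝ => t - s) (-1) x := by
          simpa using (hasDerivAt_id x).const_sub t
        have := h1.fun_pow (b+1)
        simpa [mul_comm, mul_assoc, mul_left_comm] using this
      have hv : ∀ x ∈ Set.uIcc (0:ℝ) t,
          HasDerivAt (fun s : ℝ => s ^ (a+1) / ((a:ℝ)+1)) ((x:ℝ) ^ a) x := by
        intro x _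
        have := (hasDerivAt_pow (a+1) x).div_const ((a:ℝ)+1)
        simpa [mul_comm, mul_div_assoc, div_self ha, Nat.cast_add] using this
      have hiu : IntervalIntegrable (fun x : ℝ => -(((b:ℝ)+1) * (t - x) ^ b)) volume 0 t :=
        (by continuity : Continuous fun x : ℝ => -(((b:ℝ)+1) * (t - x) ^ b)).intervalIntegrable 0 t
      have hiv : IntervalIntegrable (fun x : ℝ => (x:ℝ) ^ a) volume 0 t :=
        (by continuity : Continuous fun x : ℝ => (x:ℝ) ^ a).intervalIntegrable 0 t
      have H := intervalIntegral.integral_mul_deriv_eq_deriv_mul hu hv hiu hiv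
      have key : ∫ s in (0:ℝ)..t, s ^ a * (t - s) ^ (b+1)
          = ((b:ℝ)+1)/((a:ℝ)+1) * ∫ s in (0:ℝ)..t, s ^ (a+1) * (t - s) ^ b := by
        have e1 : (∫ s in (0:ℝ)..t, s ^ a * (t - s) ^ (b+1))
            = ∫ s in (0:ℝ)..t, (t - s) ^ (b+1) * s ^ a := by
          apply intervalIntegral.integral_congr; intro s _; ring
        rw [e1, H]
        simp only [sub_self, zero_pow (Nat.succ_ne_zero b), zero_mul, zero_sub,
          zero_pow (Nat.succ_ne_zero a), zero_div, mul_zero, neg_zero, sub_zero, zero_sub]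
        rw [← intervalIntegral.integral_neg, ← intervalIntegral.integral_const_mul]
        apply intervalIntegral.integral_congr; intro s _
        field_simp
      rw [key, ih (a+1)]
      have he : a + 1 + b + 1 = a + (b+1) + 1 := by omega
      rw [he]
      rw [Nat.factorial_succ a, Nat.factorial_succ b]
      push_cast
      have hf : ((a + (b+1) + 1).factorial : ℝ) ≠ 0 := by
        exact_mod_cast Nat.factorial_ne_zero _
      field_simp

def groupEquiv (d : ℕ) (hd : 0 < d) : (Σ K : ℕ, Fin (K/d+1)) ≃ ℕ × ℕ where
  toFun x := (x.1 - d * x.2.1, x.2.1)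
  invFun p := ⟨p.1 + d * p.2, ⟨p.2, by
    have h := (Nat.le_div_iff_mul_le hd).2 (show p.2 * d ≤ p.1 + d * p.2 by
      rw [mul_comm]; omega)
    omega⟩⟩
  left_inv := by
    rintro ⟨K, ⟨M, hM⟩⟩
    have h1 : M ≤ K / d := by omega
    have h2 : d * M ≤ K := by
      have h := (Nat.le_div_iff_mul_le hd).1 h1
      rw [mul_comm]; exact h
    have h3 : K - d * M + d * M = K := by omega
    dsimp
    refine Sigma.ext h3 ?_
    rw [Fin.heq_ext_iff (by dsimp; rw [h3])]
  right_inv := by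
    rintro ⟨n, M⟩
    simp

lemma tsum_pair_group (d : ℕ) (hd : 0 < d) {w : ℕ → ℕ → ℝ}
    (hw : Summable fun p : ℕ × ℕ => w p.1 p.2) :
    ∑' p : ℕ × ℕ, w p.1 p.2 = ∑' K, ∑ M ∈ Finset.range (K/d+1), w (K - d*M) M := by
  rw [← (groupEquiv d hd).tsum_eq (fun p : ℕ × ℕ => w p.1 p.2)]
  have hs : Summable fun x : Σ K : ℕ, Fin (K/d+1) =>
      w ((groupEquiv d hd) x).1 ((groupEquiv d hd) x).2 :=
    ((groupEquiv d hd).summable_iff).2 hw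
  rw [Summable.tsum_sigma hs]
  congr 1; ext K
  rw [tsum_fintype]
  rw [← Fin.sum_univ_eq_sum_range (fun M => w (K - d*M) M) (K/d+1)]
  rfl

noncomputable def fibo (x y : ℝ) (k : ℕ) : ℝ :=
  ∑ M ∈ Finset.range (k/2+1), ((k-M).choose M : ℝ) * x^(k-2*M) * y^M

lemma fibo_ext (x y : ℝ) (k N : ℕ) (hN : k/2+1 ≤ N) :
    fibo x y k = ∑ M ∈ Finset.range N, ((k-M).choose M : ℝ) * x^(k-2*M) * y^M := by
  apply Finset.sum_subset
  · intro M hM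
    simp only [Finset.mem_range] at *
    omega
  · intro M _ hM
    simp only [Finset.mem_range, not_lt] at hM
    have : k - M < M := by omega
    rw [Nat.choose_eq_zero_of_lt this]
    simp

lemma pascal_aux (k M : ℕ) : (k+1-M).choose (M+1) = (k-M).choose M + (k-M).choose (M+1) := by
  rcases le_or_gt M k with h | h
  · have : k + 1 - M = (k - M) + 1 := by omega
    rw [this, Nat.choose_succ_succ']
  · have h2 : k - M = 0 := by omega
    have h1 : k + 1 - M = 0 ∨ k + 1 - M = 1 := by omega
    have hM : 1 ≤ M := by omega
    rw [h2]
    rcases h1 with h1 | h1 <;> rw [h1] <;>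
      simp [Nat.choose_eq_zero_of_lt (show M < M + 1 from by omega),
        Nat.choose_eq_zero_of_lt (show 1 < M + 1 from by omega),
        Nat.choose_eq_zero_of_lt (show 0 < M from hM)]

lemma fibo_rec (x y : ℝ) (k : ℕ) :
    fibo x y (k+2) = x * fibo x y (k+1) + y * fibo x y k := by
  have e2 : ∀ M : ℕ, k + 2 - 2*(M+1) = k - 2*M := by omega
  have e1 : ∀ M : ℕ, k + 1 - (M+1) = k - M := by omega
  set T : ℝ := ∑ M ∈ Finset.range (k+1), ((k-M).choose (M+1) : ℝ) * x^(k-2*M) * y^(M+1) with hT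
  -- x * fibo (k+1)
  have hx : x * fibo x y (k+1) = x^(k+2) + T := by
    rw [fibo_ext x y (k+1) (k+2) (by omega), Finset.mul_sum]
    have step : ∀ M ∈ Finset.range (k+2),
        x * (((k+1-M).choose M : ℝ) * x^(k+1-2*M) * y^M)
          = ((k+1-M).choose M : ℝ) * x^(k+2-2*M) * y^M := by
      intro M _
      rcases le_or_gt (2*M) (k+1) with h | h
      · have : k + 2 - 2*M = (k+1-2*M) + 1 := by omega
        rw [this, pow_succ]
        ring
      · rw [Nat.choose_eq_zero_of_lt (by omega)]
        simp
    rw [Finset.sum_congr rfl step]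
    rw [show k+2 = k+1+1 from rfl, Finset.sum_range_succ' _ (k+1)]
    simp only [e1, e2, Nat.sub_zero, Nat.mul_zero, Nat.choose_zero_right, Nat.cast_one, one_mul,
      pow_zero, mul_one]
    ring
  -- y * fibo k
  have hy : y * fibo x y k
      = ∑ M ∈ Finset.range (k+2), ((k-M).choose M : ℝ) * x^(k-2*M) * y^(M+1) := by
    rw [fibo_ext x y k (k+2) (by omega), Finset.mul_sum]
    apply Finset.sum_congr rfl
    intro M _
    ring
  -- second sum over range (k+2) equals T
  have hT2 : ∑ M ∈ Finset.range (k+2), ((k-M).choose (M+1) : ℝ) * x^(k-2*M) * y^(M+1) = T := by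
    rw [show k+2 = k+1+1 from rfl, Finset.sum_range_succ]
    rw [show k - (k+1) = 0 from by omega, Nat.choose_eq_zero_of_lt (by omega)]
    simp [hT]
  -- LHS
  rw [fibo_ext x y (k+2) (k+3) (by omega)]
  rw [show k+3 = k+2+1 from rfl, Finset.sum_range_succ' _ (k+2)]
  have split : ∀ M ∈ Finset.range (k+2),
      ((k+2-(M+1)).choose (M+1) : ℝ) * x^(k+2-2*(M+1)) * y^(M+1)
        = ((k-M).choose M : ℝ) * x^(k-2*M) * y^(M+1)
            + ((k-M).choose (M+1) : ℝ) * x^(k-2*M) * y^(M+1) := by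
    intro M _
    have h1 : k + 2 - (M+1) = k + 1 - M := by omega
    rw [h1, e2, pascal_aux k M]
    push_cast
    ring
  rw [Finset.sum_congr rfl split, Finset.sum_add_distrib, hT2, hx, hy]
  simp only [Nat.sub_zero, Nat.mul_zero, Nat.choose_zero_right, Nat.cast_one, one_mul,
    pow_zero, mul_one]
  ring

lemma choose_le_two_pow' (N k : ℕ) : (N.choose k : ℝ) ≤ 2^N := by
  have h : N.choose k ≤ 2^N := by
    rcases le_or_gt k N with h | h
    · calc N.choose k ≤ ∑ m ∈ Finset.range (N+1), N.choose m :=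
          Finset.single_le_sum (fun i _ => Nat.zero_le _) (Finset.mem_range.2 (by omega))
      _ = 2^N := Nat.sum_range_choose N
    · rw [Nat.choose_eq_zero_of_lt h]; exact Nat.zero_le _
  exact_mod_cast h

lemma fact_le_fact' {a b : ℕ} (h : a ≤ b) : (a.factorial : ℝ) ≤ b.factorial := by
  exact_mod_cast Nat.factorial_le h

lemma fact_pos' (a : ℕ) : (0:ℝ) < a.factorial := by exact_mod_cast a.factorial_pos

lemma fact_mul_fact_le (a b : ℕ) : (a.factorial : ℝ) * b.factorial ≤ (a+b).factorial := by
  exact_mod_cast Nat.le_of_dvd (a+b).factorial_pos (Nat.factorial_mul_factorial_dvd_factorial_add a b)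

lemma summable_even (x : ℝ) : Summable (fun m : ℕ => x^(2*m) / (2*m).factorial) := by
  apply Summable.of_nonneg_of_le (f := fun m => (x^2)^m / m.factorial)
  · intro m; rw [pow_mul]; positivity
  · intro m
    rw [pow_mul]
    exact div_le_div₀ (by positivity) le_rfl (fact_pos' m) (fact_le_fact' (by omega))
  · exact Real.summable_pow_div_factorial (x^2)

lemma even_pow_nonneg (x : ℝ) (m : ℕ) : 0 ≤ x^(2*m) := by rw [pow_mul]; positivity

lemma summable_S {c t : ℝ} (ht : 0 ≤ t) (n : ℕ) :
    Summable (fun M : ℕ =>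
      ((M+n).choose n : ℝ) * c^(2*M) * t^(2*M+n) / (2*M+n).factorial) := by
  apply Summable.of_nonneg_of_le
    (f := fun M => (2^n * t^n) * ((2*c^2*t^2)^M / M.factorial))
  · intro M
    have h1 := even_pow_nonneg c M
    positivity
  · intro M
    have h1 : ((M+n).choose n : ℝ) * c^(2*M) * t^(2*M+n)
        ≤ 2^(M+n) * c^(2*M) * t^(2*M+n) := by
      have := even_pow_nonneg c M
      have h2 : (0:ℝ) ≤ t^(2*M+n) := by positivity
      gcongr
      exact choose_le_two_pow' (M+n) n
    have h3 : ((M+n).choose n : ℝ) * c^(2*M) * t^(2*M+n) / (2*M+n).factorial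
        ≤ 2^(M+n) * c^(2*M) * t^(2*M+n) / M.factorial := by
      apply div_le_div₀ _ h1 (fact_pos' M) (fact_le_fact' (by omega))
      have := even_pow_nonneg c M
      positivity
    refine h3.trans_eq ?_
    have he : (2*c^2*t^2)^M = 2^M * c^(2*M) * t^(2*M) := by
      rw [mul_pow, mul_pow, ← pow_mul, ← pow_mul]
    rw [he, pow_add t, pow_add (2:ℝ)]
    ring
  · exact (Real.summable_pow_div_factorial (2*c^2*t^2)).mul_left _

lemma summable_pairW {c t : ℝ} (ht : 0 ≤ t) (n : ℕ) :
    Summable (fun p : ℕ × ℕ => ((p.2+n).choose n : ℝ) * c^(2*(p.1+p.2))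
      * t^(2*(p.1+p.2)+n+1) / (2*(p.1+p.2)+n+1).factorial) := by
  apply Summable.of_nonneg_of_le
    (f := fun p : ℕ × ℕ => (2^n * t^(n+1)) *
      (((c^2*t^2)^p.1 / p.1.factorial) * ((2*c^2*t^2)^p.2 / p.2.factorial)))
  · intro p
    have h1 := even_pow_nonneg c (p.1+p.2)
    positivity
  · rintro ⟨m, M⟩
    dsimp only
    have hcc := even_pow_nonneg c (m+M)
    have h1 : ((M+n).choose n : ℝ) * c^(2*(m+M)) * t^(2*(m+M)+n+1)
        ≤ 2^(M+n) * c^(2*(m+M)) * t^(2*(m+M)+n+1) := by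
      have h2 : (0:ℝ) ≤ t^(2*(m+M)+n+1) := by positivity
      gcongr
      exact choose_le_two_pow' (M+n) n
    have hfac : (m.factorial : ℝ) * M.factorial ≤ (2*(m+M)+n+1).factorial :=
      (fact_mul_fact_le m M).trans (fact_le_fact' (by omega))
    have h3 : ((M+n).choose n : ℝ) * c^(2*(m+M)) * t^(2*(m+M)+n+1) / (2*(m+M)+n+1).factorial
        ≤ 2^(M+n) * c^(2*(m+M)) * t^(2*(m+M)+n+1) / (m.factorial * M.factorial) := by
      apply div_le_div₀ _ h1 (by positivity) hfac
      positivity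
    refine h3.trans_eq ?_
    have he1 : (c^2*t^2)^m = c^(2*m) * t^(2*m) := by rw [mul_pow, ← pow_mul, ← pow_mul]
    have he2 : (2*c^2*t^2)^M = 2^M * (c^(2*M) * t^(2*M)) := by
      rw [mul_pow, mul_pow, ← pow_mul, ← pow_mul]; ring
    rw [he1, he2]
    have hc : c^(2*(m+M)) = c^(2*m) * c^(2*M) := by rw [← pow_add]; congr 1; ring
    have htt : t^(2*(m+M)+n+1) = t^(2*m) * t^(2*M) * t^(n+1) := by
      rw [← pow_add, ← pow_add]; congr 1; ring
    rw [hc, htt, pow_add (2:ℝ) M n]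
    field_simp
  · exact (((Real.summable_pow_div_factorial (c^2*t^2)).mul_of_nonneg
      (Real.summable_pow_div_factorial (2*c^2*t^2))
      (fun m => by positivity) (fun M => by positivity)).mul_left _)

noncomputable def SS (c : ℝ) (n : ℕ) (t : ℝ) : ℝ :=
  ∑' M : ℕ, ((M+n).choose n : ℝ) * c^(2*M) * t^(2*M+n) / (2*M+n).factorial

noncomputable def Fterm (c t : ℝ) (n : ℕ) (p : ℕ × ℕ) (s : ℝ) : ℝ :=
  ((c*s)^(2*p.1) / (2*p.1).factorial) *
    (((p.2+n).choose n : ℝ) * c^(2*p.2) * (t-s)^(2*p.2+n) / (2*p.2+n).factorial)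

noncomputable def Wterm (c t : ℝ) (n : ℕ) (p : ℕ × ℕ) : ℝ :=
  ((p.2+n).choose n : ℝ) * c^(2*(p.1+p.2)) * t^(2*(p.1+p.2)+n+1)
    / (2*(p.1+p.2)+n+1).factorial

lemma Fterm_cont (c t : ℝ) (n : ℕ) (p : ℕ × ℕ) : Continuous (Fterm c t n p) := by
  unfold Fterm
  apply Continuous.mul
  · exact (((continuous_const.mul continuous_id).pow _).div_const _)
  · exact ((continuous_const.mul ((continuous_const.sub continuous_id).pow _)).div_const _)

lemma G_eq (c : ℝ) : ∀ (n : ℕ) (t : ℝ), 0 ≤ t → G c n n t = SS c n t := by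
  intro n
  induction n with
  | zero =>
      intro t ht
      have h0 : G c 0 0 t = Real.cosh (c*t) := by simp [G]
      rw [h0, Real.cosh_eq_tsum (c*t)]
      unfold SS
      apply tsum_congr
      intro M
      rw [mul_pow]
      simp
  | succ n ih =>
      intro t ht
      have hG : G c (n+1) (n+1) t = ∫ s in (0:ℝ)..t, Real.cosh (c*s) * G c n n (t-s) := by
        simp [G]
      have hpt : ∀ s ∈ Set.Ioc (0:ℝ) t,
          Real.cosh (c*s) * G c n n (t-s) = ∑' p : ℕ × ℕ, Fterm c t n p s := by
        intro s hs
        have hts : (0:ℝ) ≤ t - s := by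
          have := hs.2; linarith
        rw [ih (t-s) hts, Real.cosh_eq_tsum (c*s)]
        unfold SS
        have h1 : Summable (fun q : ℕ × ℕ => ((c*s)^(2*q.1) / ((2*q.1).factorial : ℝ)) *
            (((q.2+n).choose n : ℝ) * c^(2*q.2) * (t-s)^(2*q.2+n) / (2*q.2+n).factorial)) :=
          (summable_even (c*s)).mul_of_nonneg (summable_S hts n)
            (fun m => by have := even_pow_nonneg (c*s) m; positivity)
            (fun M => by have := even_pow_nonneg c M; positivity)
        have h2 := Summable.tsum_mul_tsum (summable_even (c*s)) (summable_S hts n) h1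
        rw [h2]
        exact tsum_congr fun p => rfl
      have hFnonneg : ∀ p : ℕ × ℕ, ∀ s ∈ Set.Ioc (0:ℝ) t, 0 ≤ Fterm c t n p s := by
        rintro ⟨m, M⟩ s hs
        have hts : (0:ℝ) ≤ t - s := by have := hs.2; linarith
        have h1 := even_pow_nonneg (c*s) m
        have h2 := even_pow_nonneg c M
        unfold Fterm
        positivity
      have hint : ∀ p : ℕ × ℕ, ∫ s in Set.Ioc (0:ℝ) t, Fterm c t n p s = Wterm c t n p := by
        rintro ⟨m, M⟩
        rw [← intervalIntegral.integral_of_le ht]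
        have hcong : ∀ s : ℝ, Fterm c t n (m,M) s
            = (c^(2*m)/((2*m).factorial : ℝ) * (((M+n).choose n:ℝ) * c^(2*M)/(2*M+n).factorial))
              * (s^(2*m) * (t-s)^(2*M+n)) := by
          intro s
          unfold Fterm
          rw [mul_pow]
          ring
        simp only [hcong]
        rw [intervalIntegral.integral_const_mul, beta_int]
        unfold Wterm
        simp only []
        rw [show 2*m+(2*M+n)+1 = 2*(m+M)+n+1 from by omega,
          show 2*(m+M) = 2*m+2*M from by ring, pow_add]
        have f1 := fact_pos' (2*m)
        have f2 := fact_pos' (2*M+n)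
        have f3 := fact_pos' (2*m+2*M+n+1)
        field_simp
        ring
      have hInt : ∀ p : ℕ × ℕ, Integrable (Fterm c t n p) (volume.restrict (Set.Ioc (0:ℝ) t)) :=
        fun p => (Fterm_cont c t n p).integrableOn_Ioc
      have hSumW : Summable fun p : ℕ × ℕ => Wterm c t n p := by
        have := summable_pairW (c := c) ht n
        exact this
      have hSumNorm : Summable fun p : ℕ × ℕ => ∫ s in Set.Ioc (0:ℝ) t, ‖Fterm c t n p s‖ := by
        have he : ∀ p : ℕ × ℕ, ∫ s in Set.Ioc (0:ℝ) t, ‖Fterm c t n p s‖ = Wterm c t n p := by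
          intro p
          rw [setIntegral_congr_fun measurableSet_Ioc
            (fun s hs => Real.norm_of_nonneg (hFnonneg p s hs))]
          exact hint p
        rw [funext he]
        exact hSumW
      calc G c (n+1) (n+1) t
          = ∫ s in Set.Ioc (0:ℝ) t, Real.cosh (c*s) * G c n n (t-s) := by
            rw [hG, intervalIntegral.integral_of_le ht]
        _ = ∫ s in Set.Ioc (0:ℝ) t, ∑' p : ℕ × ℕ, Fterm c t n p s :=
            setIntegral_congr_fun measurableSet_Ioc hpt
        _ = ∑' p : ℕ × ℕ, ∫ s in Set.Ioc (0:ℝ) t, Fterm c t n p s :=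
            (MeasureTheory.integral_tsum_of_summable_integral_norm hInt hSumNorm).symm
        _ = ∑' p : ℕ × ℕ, Wterm c t n p := tsum_congr hint
        _ = ∑' K : ℕ, ∑ M ∈ Finset.range (K/1+1),
              ((M+n).choose n : ℝ) * c^(2*((K-1*M)+M)) * t^(2*((K-1*M)+M)+n+1)
                / (2*((K-1*M)+M)+n+1).factorial := by
            exact tsum_pair_group 1 one_pos (w := fun m M =>
              ((M+n).choose n : ℝ) * c^(2*(m+M)) * t^(2*(m+M)+n+1)
                / (2*(m+M)+n+1).factorial) hSumW
        _ = SS c (n+1) t := by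
            unfold SS
            apply tsum_congr
            intro K
            have hterm : ∀ M ∈ Finset.range (K/1+1),
                ((M+n).choose n : ℝ) * c^(2*((K-1*M)+M)) * t^(2*((K-1*M)+M)+n+1)
                  / (2*((K-1*M)+M)+n+1).factorial
                = ((M+n).choose n : ℝ) * (c^(2*K) * t^(2*K+n+1) / (2*K+n+1).factorial) := by
              intro M hM
              simp only [Finset.mem_range, Nat.div_one] at hM
              rw [show (K-1*M)+M = K from by omega]
              ring
            rw [Finset.sum_congr rfl hterm, ← Finset.sum_mul]
            rw [show ∑ M ∈ Finset.range (K/1+1), ((M+n).choose n : ℝ)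
              = ((K+n+1).choose (n+1) : ℝ) from by
                rw [Nat.div_one, ← Nat.cast_sum]
                exact_mod_cast congrArg (Nat.cast (R := ℝ)) (hockey n K)]
            ring

lemma summable_pair2 {c t l : ℝ} (ht : 0 ≤ t) (hl : 0 ≤ l) :
    Summable (fun p : ℕ × ℕ => (l/2)^p.1 *
      (((p.2+p.1).choose p.1 : ℝ) * c^(2*p.2) * t^(2*p.2+p.1) / (2*p.2+p.1).factorial)) := by
  apply Summable.of_nonneg_of_le
    (f := fun p : ℕ × ℕ => ((l*t)^p.1 / p.1.factorial) * ((2*c^2*t^2)^p.2 / p.2.factorial))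
  · intro p
    have h2 := even_pow_nonneg c p.2
    positivity
  · rintro ⟨n, M⟩
    dsimp only
    have hcc := even_pow_nonneg c M
    have h1 : ((M+n).choose n : ℝ) * (c^(2*M) * t^(2*M+n))
        ≤ 2^(M+n) * (c^(2*M) * t^(2*M+n)) := by
      have h2 : (0:ℝ) ≤ t^(2*M+n) := by positivity
      gcongr
      exact choose_le_two_pow' (M+n) n
    have hfac : (n.factorial : ℝ) * M.factorial ≤ (2*M+n).factorial := by
      refine (le_of_eq (by ring)).trans ((fact_mul_fact_le n M).trans (fact_le_fact' (by omega)))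
    have h3 : ((M+n).choose n : ℝ) * (c^(2*M) * t^(2*M+n)) / (2*M+n).factorial
        ≤ 2^(M+n) * (c^(2*M) * t^(2*M+n)) / (n.factorial * M.factorial) := by
      apply div_le_div₀ _ h1 (by positivity) hfac
      positivity
    have he : (l/2)^n * (((M+n).choose n : ℝ) * c^(2*M) * t^(2*M+n) / (2*M+n).factorial)
        = (l/2)^n * (((M+n).choose n : ℝ) * (c^(2*M) * t^(2*M+n)) / (2*M+n).factorial) := by
      ring
    rw [he]
    have h4 : (l/2)^n * (((M+n).choose n : ℝ) * (c^(2*M) * t^(2*M+n)) / (2*M+n).factorial)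
        ≤ (l/2)^n * (2^(M+n) * (c^(2*M) * t^(2*M+n)) / (n.factorial * M.factorial)) := by
      apply mul_le_mul_of_nonneg_left h3 (by positivity)
    refine h4.trans_eq ?_
    have he2 : (2*c^2*t^2)^M = 2^M * (c^(2*M) * t^(2*M)) := by
      rw [mul_pow, mul_pow, ← pow_mul, ← pow_mul]; ring
    have he3 : (l*t)^n = l^n * t^n := mul_pow l t n
    rw [he2, he3, pow_add t, pow_add (2:ℝ) M n, div_pow l 2 n]
    field_simp
  · exact ((Real.summable_pow_div_factorial (l*t)).mul_of_nonneg
      (Real.summable_pow_div_factorial (2*c^2*t^2))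
      (fun n => by positivity) (fun M => by positivity))

lemma exp_tsum (x : ℝ) : Real.exp x = ∑' n : ℕ, x^n / n.factorial := by
  rw [Real.exp_eq_exp_ℝ, NormedSpace.exp_eq_tsum_div]

theorem mean_distance_single_particle (c l : ℝ) (hc : 0 < c) (hl : 0 < l)
    (t : ℝ) (ht : 0 ≤ t) :
    Real.exp (-l * t / 2) * ∑' n : ℕ, (l / 2) ^ n * G c n n t =
      Real.exp (-l * t / 4) / 2 *
        ((1 + l / Real.sqrt (l ^ 2 + 16 * c ^ 2)) *
            Real.exp (t / 4 * Real.sqrt (l ^ 2 + 16 * c ^ 2)) +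
          (1 - l / Real.sqrt (l ^ 2 + 16 * c ^ 2)) *
            Real.exp (-(t / 4) * Real.sqrt (l ^ 2 + 16 * c ^ 2))) := by
  set q : ℝ := Real.sqrt (l ^ 2 + 16 * c ^ 2) with hqdef
  have hq0 : 0 < q := Real.sqrt_pos.2 (by positivity)
  have hq2 : q^2 = l^2 + 16*c^2 := Real.sq_sqrt (by positivity)
  set A : ℝ := (1 + l/q)/2 with hA
  set B : ℝ := (1 - l/q)/2 with hB
  -- coefficients
  have pow_rec : ∀ p : ℝ, p^2 = (l/2)*p + c^2 → ∀ k : ℕ, p^(k+2) = (l/2)*p^(k+1) + c^2 * p^k := by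
    intro p hp k
    calc p^(k+2) = p^k * p^2 := by ring
      _ = p^k * ((l/2)*p + c^2) := by rw [hp]
      _ = (l/2)*p^(k+1) + c^2 * p^k := by ring
  have hpp : ((l+q)/4)^2 = (l/2)*((l+q)/4) + c^2 := by nlinarith [hq2]
  have hpm : ((l-q)/4)^2 = (l/2)*((l-q)/4) + c^2 := by nlinarith [hq2]
  have coef_eq : ∀ k : ℕ, A*((l+q)/4)^k + B*((l-q)/4)^k = fibo (l/2) (c^2) k := by
    have base0 : A*((l+q)/4)^0 + B*((l-q)/4)^0 = fibo (l/2) (c^2) 0 := by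
      unfold fibo
      simp only [pow_zero, mul_one]
      rw [hA, hB]
      norm_num
      ring
    have base1 : A*((l+q)/4)^1 + B*((l-q)/4)^1 = fibo (l/2) (c^2) 1 := by
      unfold fibo
      rw [hA, hB]
      norm_num
      field_simp
      ring
    have key : ∀ k : ℕ, (A*((l+q)/4)^k + B*((l-q)/4)^k = fibo (l/2) (c^2) k)
        ∧ (A*((l+q)/4)^(k+1) + B*((l-q)/4)^(k+1) = fibo (l/2) (c^2) (k+1)) := by
      intro k
      induction k with
      | zero => exact ⟨base0, base1⟩
      | succ k ih =>
          refine ⟨ih.2, ?_⟩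
          rw [fibo_rec, ← ih.1, ← ih.2, pow_rec _ hpp k, pow_rec _ hpm k]
          ring
    exact fun k => (key k).1
  -- sum computation
  have hw : Summable (fun p : ℕ × ℕ => (l/2)^p.1 *
      (((p.2+p.1).choose p.1 : ℝ) * c^(2*p.2) * t^(2*p.2+p.1) / (2*p.2+p.1).factorial)) :=
    summable_pair2 ht hl.le
  have hsum : ∑' n : ℕ, (l / 2) ^ n * G c n n t
      = A * Real.exp ((l+q)/4*t) + B * Real.exp ((l-q)/4*t) := by
    calc ∑' n : ℕ, (l / 2) ^ n * G c n n t
        = ∑' n : ℕ, (l / 2) ^ n * SS c n t := by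
          exact tsum_congr fun n => by rw [G_eq c n t ht]
      _ = ∑' n : ℕ, ∑' M : ℕ, (l/2)^n *
            (((M+n).choose n : ℝ) * c^(2*M) * t^(2*M+n) / (2*M+n).factorial) := by
          exact tsum_congr fun n => by rw [tsum_mul_left]; rfl
      _ = ∑' p : ℕ × ℕ, (l/2)^p.1 *
            (((p.2+p.1).choose p.1 : ℝ) * c^(2*p.2) * t^(2*p.2+p.1) / (2*p.2+p.1).factorial) :=
          (Summable.tsum_prod' hw (fun n => hw.prod_factor n)).symm
      _ = ∑' K : ℕ, ∑ M ∈ Finset.range (K/2+1), (l/2)^(K-2*M) *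
            (((M+(K-2*M)).choose (K-2*M) : ℝ) * c^(2*M) * t^(2*M+(K-2*M))
              / (2*M+(K-2*M)).factorial) :=
          tsum_pair_group 2 two_pos (w := fun n M => (l/2)^n *
            (((M+n).choose n : ℝ) * c^(2*M) * t^(2*M+n) / (2*M+n).factorial)) hw
      _ = ∑' K : ℕ, fibo (l/2) (c^2) K * (t^K / K.factorial) := by
          apply tsum_congr
          intro K
          unfold fibo
          rw [Finset.sum_mul]
          apply Finset.sum_congr rfl
          intro M hM
          simp only [Finset.mem_range] at hM
          have h2M : 2*M ≤ K := by omega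
          have e1 : M + (K - 2*M) = K - M := by omega
          have e2 : 2*M + (K - 2*M) = K := by omega
          have e3 : (K - M).choose (K - 2*M) = (K - M).choose M := by
            rw [show K - 2*M = (K - M) - M from by omega]
            exact Nat.choose_symm (by omega)
          rw [e1, e2, e3, pow_mul]
          ring
      _ = ∑' K : ℕ, (A * (((l+q)/4*t)^K / K.factorial) + B * (((l-q)/4*t)^K / K.factorial)) := by
          apply tsum_congr
          intro K
          rw [← coef_eq K, mul_pow, mul_pow]
          ring
      _ = A * Real.exp ((l+q)/4*t) + B * Real.exp ((l-q)/4*t) := by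
          rw [Summable.tsum_add (((Real.summable_pow_div_factorial ((l+q)/4*t)).mul_left A))
            (((Real.summable_pow_div_factorial ((l-q)/4*t)).mul_left B)),
            tsum_mul_left, tsum_mul_left, ← exp_tsum, ← exp_tsum]
  rw [hsum]
  have E1 : Real.exp (-l*t/2) * Real.exp ((l+q)/4*t)
      = Real.exp (-l*t/4) * Real.exp (t/4*q) := by
    rw [← Real.exp_add, ← Real.exp_add]; congr 1; ring
  have E2 : Real.exp (-l*t/2) * Real.exp ((l-q)/4*t)
      = Real.exp (-l*t/4) * Real.exp (-(t/4)*q) := by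
    rw [← Real.exp_add, ← Real.exp_add]; congr 1; ring
  calc Real.exp (-l*t/2) * (A * Real.exp ((l+q)/4*t) + B * Real.exp ((l-q)/4*t))
      = A * (Real.exp (-l*t/2) * Real.exp ((l+q)/4*t))
        + B * (Real.exp (-l*t/2) * Real.exp ((l-q)/4*t)) := by ring
    _ = A * (Real.exp (-l*t/4) * Real.exp (t/4*q))
        + B * (Real.exp (-l*t/4) * Real.exp (-(t/4)*q)) := by rw [E1, E2]
    _ = Real.exp (-l * t / 4) / 2 *
        ((1 + l/q) * Real.exp (t/4*q) + (1 - l/q) * Real.exp (-(t/4)*q)) := by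
        rw [hA, hB]; ring
end

section
/- The function u(t) = (8c² e^{−3λt/4}/√(λ²+16c²))[e^{−(t/4)√(λ²+16c²)}/(3√(λ²+16c²)+5λ) + e^{(t/4)√(λ²+16c²)}/(3√(λ²+16c²)−5λ)] + ((λ+2c)/(2(λ+3c))) e^{ct} + ((λ−2c)/(2(λ−3c))) e^{−ct} satisfies the ODE u'' − c²u = (λc² e^{−3λt/4}/√(λ²+16c²))[e^{−(t/4)√(λ²+16c²)} − e^{(t/4)√(λ²+16c²)}] for all t. -/
open Real

private lemma hexp_aux (k s : ℝ) :
    HasDerivAt (fun x : ℝ => Real.exp (k * x)) (k * Real.exp (k * s)) s := by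
  simpa [mul_comm] using ((hasDerivAt_id s).const_mul k).exp

theorem center_of_mass_ode (l c : ℝ) (hl : 0 < l) (hc : 0 < c) (hne : l ≠ 3 * c) :
    let R := Real.sqrt (l ^ 2 + 16 * c ^ 2)
    let u : ℝ → ℝ := fun t =>
      8 * c ^ 2 * Real.exp (-(3 * l * t) / 4) / R *
          (Real.exp (-(t / 4) * R) / (3 * R + 5 * l) +
            Real.exp ((t / 4) * R) / (3 * R - 5 * l)) +
        (l + 2 * c) / (2 * (l + 3 * c)) * Real.exp (c * t) +
        (l - 2 * c) / (2 * (l - 3 * c)) * Real.exp (-(c * t))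
    ∀ t : ℝ,
      deriv (deriv u) t - c ^ 2 * u t =
        l * c ^ 2 * Real.exp (-(3 * l * t) / 4) / R *
          (Real.exp (-(t / 4) * R) - Real.exp ((t / 4) * R)) := by
  intro R u t
  have hR0 : 0 < R := Real.sqrt_pos.mpr (by positivity)
  have hR2 : R ^ 2 = l ^ 2 + 16 * c ^ 2 := Real.sq_sqrt (by positivity)
  have h1 : (3 * R + 5 * l) ≠ 0 := by positivity
  have h2 : (3 * R - 5 * l) ≠ 0 := by
    intro h
    have hl3 : l ^ 2 = 9 * c ^ 2 := by nlinarith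
    have : l = 3 * c := by nlinarith
    exact hne this
  set A := 8 * c ^ 2 / (R * (3 * R + 5 * l)) with hA
  set B := 8 * c ^ 2 / (R * (3 * R - 5 * l)) with hB
  set C := (l + 2 * c) / (2 * (l + 3 * c)) with hC
  set D := (l - 2 * c) / (2 * (l - 3 * c)) with hD
  set a := (-(3 * l) - R) / 4 with ha
  set b := (R - 3 * l) / 4 with hb
  have e1 : ∀ s : ℝ, Real.exp (-(3 * l * s) / 4) * Real.exp (-(s / 4) * R)
      = Real.exp (a * s) := by
    intro s; rw [← Real.exp_add]; congr 1; rw [ha]; ring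
  have e2 : ∀ s : ℝ, Real.exp (-(3 * l * s) / 4) * Real.exp ((s / 4) * R)
      = Real.exp (b * s) := by
    intro s; rw [← Real.exp_add]; congr 1; rw [hb]; ring
  have hu : u = fun s => A * Real.exp (a * s) + B * Real.exp (b * s)
      + C * Real.exp (c * s) + D * Real.exp (-c * s) := by
    funext s
    show 8 * c ^ 2 * Real.exp (-(3 * l * s) / 4) / R *
          (Real.exp (-(s / 4) * R) / (3 * R + 5 * l) +
            Real.exp ((s / 4) * R) / (3 * R - 5 * l)) +
        C * Real.exp (c * s) + D * Real.exp (-(c * s)) = _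
    rw [← e1 s, ← e2 s, hA, hB, neg_mul]
    field_simp
  have hv : ∀ s, HasDerivAt u
      (A * (a * Real.exp (a * s)) + B * (b * Real.exp (b * s))
        + C * (c * Real.exp (c * s)) + D * (-c * Real.exp (-c * s))) s := by
    intro s; rw [hu]
    exact ((((hexp_aux a s).const_mul A).add ((hexp_aux b s).const_mul B)).add
      ((hexp_aux c s).const_mul C)).add ((hexp_aux (-c) s).const_mul D)
  have hdu : deriv u = fun s => A * (a * Real.exp (a * s)) + B * (b * Real.exp (b * s))
      + C * (c * Real.exp (c * s)) + D * (-c * Real.exp (-c * s)) :=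
    funext fun s => (hv s).deriv
  have hv2 : HasDerivAt (deriv u)
      (A * a * (a * Real.exp (a * t)) + B * b * (b * Real.exp (b * t))
        + C * c * (c * Real.exp (c * t)) + D * (-c) * (-c * Real.exp (-c * t))) t := by
    rw [hdu]
    have h1' := ((hexp_aux a t).const_mul (A * a)).add ((hexp_aux b t).const_mul (B * b))
    have h2' := (h1'.add ((hexp_aux c t).const_mul (C * c))).add
      ((hexp_aux (-c) t).const_mul (D * (-c)))
    convert h2' using 1
    all_goals first | rfl | (funext y; simp only [Pi.add_apply]; ring)
  have hdd := hv2.deriv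
  rw [hdd, hu]
  have hsA : A * (a * a) - c ^ 2 * A = l * c ^ 2 / R := by
    have haa : a * a - c ^ 2 = l * (3 * R + 5 * l) / 8 := by
      rw [ha]; linear_combination hR2 / 16
    calc A * (a * a) - c ^ 2 * A = A * (a * a - c ^ 2) := by ring
      _ = l * c ^ 2 / R := by rw [haa, hA]; field_simp
  have hsB : B * (b * b) - c ^ 2 * B = -(l * c ^ 2 / R) := by
    have hbb : b * b - c ^ 2 = -(l * (3 * R - 5 * l)) / 8 := by
      rw [hb]; linear_combination hR2 / 16
    calc B * (b * b) - c ^ 2 * B = B * (b * b - c ^ 2) := by ring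
      _ = -(l * c ^ 2 / R) := by rw [hbb, hB]; field_simp; rw [show R * 3 - 5 * l = 3 * R - 5 * l by ring, div_self h2]
  have key : l * c ^ 2 * Real.exp (-(3 * l * t) / 4) / R *
        (Real.exp (-(t / 4) * R) - Real.exp ((t / 4) * R))
      = (l * c ^ 2 / R) * Real.exp (a * t) - (l * c ^ 2 / R) * Real.exp (b * t) := by
    rw [← e1 t, ← e2 t]; ring
  rw [key]
  linear_combination Real.exp (a * t) * hsA + Real.exp (b * t) * hsB
end

section
/- For λ, c > 0 with λ > c, and each natural number k ≥ 1, the function f_k with Laplace transform [λ(λ+μ)/((λ+μ)² − c²)]^k (in the variable μ) is given by f_k(s) = (λ^k/2^k) Σ_{r=0}^{k} C(k,r) g_r(s), where g_0(s) = (s^{k−1}/(k−1)!) e^{−s(λ+c)}, g_k(s) = (s^{k−1}/(k−1)!) e^{s(c−λ)}, and for 1 ≤ r ≤ k−1, g_r(s) = ∫₀^s (w^{r−1}/(r−1)!) e^{w(c−λ)} ((s−w)^{k−r−1}/(k−r−1)!) e^{−(s−w)(λ+c)} dw; i.e., ∫₀^∞ e^{−μs} f_k(s) ds = [λ(λ+μ)/((λ+μ)²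 − c²)]^k for all μ > c. -/
open Real MeasureTheory intervalIntegral

set_option maxHeartbeats 1000000

lemma gamma_pow_aux {a : ℝ} (ha : 0 < a) (n : ℕ) :
    ∫ x in Set.Ioi (0:ℝ), x ^ n * Real.exp (-(a * x)) = n.factorial / a ^ (n + 1) := by
  have h := Real.integral_rpow_mul_exp_neg_mul_Ioi (a := (n : ℝ) + 1) (r := a)
    (by positivity) ha
  rw [Real.Gamma_nat_eq_factorial] at h
  simp only [add_sub_cancel_right, Real.rpow_natCast] at h
  rw [show ((n : ℝ) + 1) = ((n + 1 : ℕ) : ℝ) by push_cast; ring, Real.rpow_natCast] at h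
  rw [h, div_pow, one_pow]
  ring

lemma gamma_integrable_aux {a : ℝ} (ha : 0 < a) (n : ℕ) :
    MeasureTheory.IntegrableOn (fun x : ℝ => x ^ n * Real.exp (-(a * x))) (Set.Ioi 0) := by
  have h := integrableOn_rpow_mul_exp_neg_mul_rpow (s := (n : ℝ)) (p := 1)
    (lt_of_lt_of_le (by norm_num) (Nat.cast_nonneg n)) one_pos ha
  refine h.congr_fun (fun x hx => ?_) measurableSet_Ioi
  dsimp only; rw [Real.rpow_natCast, Real.rpow_one, neg_mul]

lemma conv_eq_aux {a b : ℝ} (ha : 0 < a) (hb : 0 < b) (m n : ℕ) :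
    ∫ s in Set.Ioi (0:ℝ), ∫ w in (0:ℝ)..s,
        (w ^ m * Real.exp (-(a * w))) * ((s - w) ^ n * Real.exp (-(b * (s - w)))) =
      (m.factorial / a ^ (m + 1)) * (n.factorial / b ^ (n + 1)) := by
  have h := MeasureTheory.integral_posConvolution (μ := volume) (ν := volume)
    (gamma_integrable_aux ha m) (gamma_integrable_aux hb n) (ContinuousLinearMap.mul ℝ ℝ)
  simp only [ContinuousLinearMap.mul_apply'] at h
  rw [h, gamma_pow_aux ha m, gamma_pow_aux hb n]

lemma conv_integrable_aux {a b : ℝ} (ha : 0 < a) (hb : 0 < b) (m n : ℕ) :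
    MeasureTheory.IntegrableOn (fun s : ℝ => ∫ w in (0:ℝ)..s,
      (w ^ m * Real.exp (-(a * w))) * ((s - w) ^ n * Real.exp (-(b * (s - w))))) (Set.Ioi 0) := by
  have h := MeasureTheory.integrable_posConvolution (μ := volume) (ν := volume)
    (gamma_integrable_aux ha m) (gamma_integrable_aux hb n) (ContinuousLinearMap.mul ℝ ℝ)
  rw [MeasureTheory.posConvolution, MeasureTheory.integrable_indicator_iff measurableSet_Ioi] at h
  simpa only [ContinuousLinearMap.mul_apply'] using h

theorem laplace_transform_fk (l c : ℝ) (hc : 0 < c) (hl : c < l) (k : ℕ) (hk : 1 ≤ k) :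
    ∀ μ : ℝ, c < μ →
      ∫ s in Set.Ioi (0:ℝ),
          Real.exp (-μ * s) *
            ((l ^ k / 2 ^ k) *
              ∑ r ∈ Finset.range (k + 1),
                (k.choose r : ℝ) *
                  (if r = 0 then
                      s ^ (k - 1) / (k - 1).factorial * Real.exp (-s * (l + c))
                    else if r = k then
                      s ^ (k - 1) / (k - 1).factorial * Real.exp (s * (c - l))
                    else
                      ∫ w in (0:ℝ)..s,
                        w ^ (r - 1) / (r - 1).factorial * Real.exp (w * (c - l)) *
                          ((s - w) ^ (k - r - 1) / (k - r - 1).factorial) *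
                          Real.exp (-(s - w) * (l + c)))) =
        (l * (l + μ) / ((l + μ) ^ 2 - c ^ 2)) ^ k := by
  intro μ hμ
  have hA : (0:ℝ) < μ + l - c := by linarith
  have hB : (0:ℝ) < μ + l + c := by linarith
  set A : ℝ := μ + l - c with hA_def
  set B : ℝ := μ + l + c with hB_def
  -- the per-summand function
  set G : ℕ → ℝ → ℝ := fun r s =>
    Real.exp (-μ * s) *
      (if r = 0 then
          s ^ (k - 1) / (k - 1).factorial * Real.exp (-s * (l + c))
        else if r = k then
          s ^ (k - 1) / (k - 1).factorial * Real.exp (s * (c - l))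
        else
          ∫ w in (0:ℝ)..s,
            w ^ (r - 1) / (r - 1).factorial * Real.exp (w * (c - l)) *
              ((s - w) ^ (k - r - 1) / (k - r - 1).factorial) *
              Real.exp (-(s - w) * (l + c))) with hG_def
  have hfac : ∀ n : ℕ, ((n.factorial : ℝ)) ≠ 0 := fun n => by
    exact_mod_cast n.factorial_ne_zero
  -- pointwise identities and computations per r
  have key : ∀ r ∈ Finset.range (k + 1),
      (∫ s in Set.Ioi (0:ℝ), G r s) = A⁻¹ ^ r * B⁻¹ ^ (k - r) ∧
      MeasureTheory.IntegrableOn (G r) (Set.Ioi 0) := by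
    intro r hr
    rw [Finset.mem_range] at hr
    by_cases h0 : r = 0
    · subst h0
      have e0 : ∀ s : ℝ, G 0 s
          = ((k - 1).factorial : ℝ)⁻¹ * (s ^ (k - 1) * Real.exp (-(B * s))) := by
        intro s
        simp only [hG_def, eq_self_iff_true, if_true]
        rw [show -(B * s) = (-μ * s) + (-s * (l + c)) by rw [hB_def]; ring, Real.exp_add]
        ring
      have hkk : (k - 1) + 1 = k := Nat.succ_pred_eq_of_pos hk
      constructor
      · simp only [e0]
        rw [MeasureTheory.integral_const_mul, gamma_pow_aux hB (k - 1), hkk]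
        rw [pow_zero, one_mul, Nat.sub_zero]
        field_simp
        rw [one_div_pow, mul_one_div_cancel (pow_ne_zero _ hB.ne')]
      · exact MeasureTheory.IntegrableOn.congr_fun
          ((gamma_integrable_aux hB (k - 1)).const_mul _)
          (fun s _ => (e0 s).symm) measurableSet_Ioi
    · by_cases hkr : r = k
      · have ek : ∀ s : ℝ, G r s
            = ((k - 1).factorial : ℝ)⁻¹ * (s ^ (k - 1) * Real.exp (-(A * s))) := by
          intro s
          simp only [hG_def, if_neg h0, if_pos hkr]
          rw [show -(A * s) = (-μ * s) + (s * (c - l)) by rw [hA_def]; ring, Real.exp_add]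
          ring
        have hkk : (k - 1) + 1 = k := Nat.succ_pred_eq_of_pos hk
        constructor
        · simp only [ek]
          rw [MeasureTheory.integral_const_mul, gamma_pow_aux hA (k - 1), hkk]
          rw [hkr, Nat.sub_self, pow_zero, mul_one]
          field_simp
          rw [one_div_pow, mul_one_div_cancel (pow_ne_zero _ hA.ne')]
        · exact MeasureTheory.IntegrableOn.congr_fun
            ((gamma_integrable_aux hA (k - 1)).const_mul _)
            (fun s _ => (ek s).symm) measurableSet_Ioi
      · -- middle case
        have hr1 : 1 ≤ r := Nat.one_le_iff_ne_zero.mpr h0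
        have hrk : r < k := lt_of_le_of_ne (Nat.lt_succ_iff.mp hr) hkr
        set m : ℕ := r - 1 with hm
        set n : ℕ := k - r - 1 with hn
        have hm1 : m + 1 = r := by omega
        have hn1 : n + 1 = k - r := by omega
        have em : ∀ s : ℝ, G r s
            = ((m.factorial : ℝ) * n.factorial)⁻¹ *
              ∫ w in (0:ℝ)..s,
                (w ^ m * Real.exp (-(A * w))) * ((s - w) ^ n * Real.exp (-(B * (s - w)))) := by
          intro s
          simp only [hG_def]
          rw [if_neg h0, if_neg hkr]
          rw [← intervalIntegral.integral_const_mul, ← intervalIntegral.integral_const_mul]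
          refine intervalIntegral.integral_congr fun w _ => ?_
          rw [show (-μ * s) = (-μ * w) + (-μ * (s - w)) by ring, Real.exp_add,
            show -(A * w) = (-μ * w) + (w * (c - l)) by rw [hA_def]; ring, Real.exp_add,
            show -(B * (s - w)) = (-μ * (s - w)) + (-(s - w) * (l + c)) by rw [hB_def]; ring,
            Real.exp_add]
          ring
        constructor
        · simp only [em]
          rw [MeasureTheory.integral_const_mul, conv_eq_aux hA hB m n, hm1, hn1]
          field_simp
          simp only [one_div, inv_pow]; field_simp
        · exact MeasureTheory.IntegrableOn.congr_fun
            ((conv_integrable_aux hA hB m n).const_mul _)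
            (fun s _ => (em s).symm) measurableSet_Ioi
  -- rewrite the integrand as a sum
  have step1 : (∫ s in Set.Ioi (0:ℝ),
        Real.exp (-μ * s) *
          ((l ^ k / 2 ^ k) *
            ∑ r ∈ Finset.range (k + 1),
              (k.choose r : ℝ) *
                (if r = 0 then
                    s ^ (k - 1) / (k - 1).factorial * Real.exp (-s * (l + c))
                  else if r = k then
                    s ^ (k - 1) / (k - 1).factorial * Real.exp (s * (c - l))
                  else
                    ∫ w in (0:ℝ)..s,
                      w ^ (r - 1) / (r - 1).factorial * Real.exp (w * (c - l)) *
                        ((s - w) ^ (k - r - 1) / (k - r - 1).factorial) *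
                        Real.exp (-(s - w) * (l + c)))))
      = ∫ s in Set.Ioi (0:ℝ), ∑ r ∈ Finset.range (k + 1),
          (l ^ k / 2 ^ k * (k.choose r : ℝ)) * G r s := by
    refine MeasureTheory.setIntegral_congr_fun measurableSet_Ioi fun s _ => ?_
    rw [Finset.mul_sum, Finset.mul_sum]
    refine Finset.sum_congr rfl fun r _ => ?_
    simp only [hG_def]
    ring
  rw [step1, MeasureTheory.integral_finset_sum _
    (fun r hr => ((key r hr).2.const_mul _))]
  have step2 : ∀ r ∈ Finset.range (k + 1),
      (∫ s in Set.Ioi (0:ℝ), (l ^ k / 2 ^ k * (k.choose r : ℝ)) * G r s)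
        = (l ^ k / 2 ^ k * (k.choose r : ℝ)) * (A⁻¹ ^ r * B⁻¹ ^ (k - r)) := by
    intro r hr
    rw [MeasureTheory.integral_const_mul, (key r hr).1]
  rw [Finset.sum_congr rfl step2]
  have hsum : ∑ r ∈ Finset.range (k + 1),
      (l ^ k / 2 ^ k * (k.choose r : ℝ)) * (A⁻¹ ^ r * B⁻¹ ^ (k - r))
      = (l ^ k / 2 ^ k) * (A⁻¹ + B⁻¹) ^ k := by
    rw [add_pow, Finset.mul_sum]
    refine Finset.sum_congr rfl fun r _ => ?_
    ring
  rw [hsum]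
  have hAB : ((l + μ) ^ 2 - c ^ 2) = A * B := by rw [hA_def, hB_def]; ring
  have hbase : (l / 2) * (A⁻¹ + B⁻¹) = l * (l + μ) / ((l + μ) ^ 2 - c ^ 2) := by
    rw [hAB]
    field_simp
    rw [hA_def, hB_def]; ring
  calc l ^ k / 2 ^ k * (A⁻¹ + B⁻¹) ^ k = ((l / 2) * (A⁻¹ + B⁻¹)) ^ k := by
        rw [mul_pow, div_pow]
    _ = (l * (l + μ) / ((l + μ) ^ 2 - c ^ 2)) ^ k := by rw [hbase]
end
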